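/- Let η ∈ [0,1], let ρ, σ be density matrices on n qubits, and let B ⊆ [n]. Then D(E_η^{⊗n}(ρ)|_B, E_η^{⊗n}(σ)|_B) ≤ Σ_{A ⊆ B} η^{|B|-|A|} (1-η)^{|A|} · D(ρ|_A, σ|_A). -/

import Mathlib

open scoped ComplexOrder

noncomputable section

/-- The state space of `n` qubits: linear operators on `(ℂ²)^{⊗ n}`,
represented as matrices indexed by `Fin n → Fin 2`. -/
abbrev QState (n : ℕ) := Matrix (Fin n → Fin 2) (Fin n → Fin 2) ℂ

/-- A density matrix: Hermitian (implied), positive semidefinite, trace one. -/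
def IsDensityMatrix {α : Type*} [Fintype α] (ρ : Matrix α α ℂ) : Prop :=
  ρ.PosSemidef ∧ ρ.trace = 1

/-- The trace norm of a matrix: `tr √(Aᴴ A)`, the sum of the singular values. -/
noncomputable def traceNorm {α : Type*} [Fintype α] [DecidableEq α] (A : Matrix α α ℂ) : ℝ :=
  ((Matrix.posSemidef_conjTranspose_mul_self A).1.eigenvectorUnitary.1 *
      Matrix.diagonal (((↑) : ℝ → ℂ) ∘ (√·) ∘ (Matrix.posSemidef_conjTranspose_mul_self A).1.eigenvalues) *
      (star (Matrix.posSemidef_conjTranspose_mul_self A).1.eigenvectorUnitary : Matrix α α ℂ)).trace.re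

/-- The trace distance `D(ρ,σ) = ‖ρ - σ‖_tr / 2`. -/
noncomputable def traceDist {α : Type*} [Fintype α] [DecidableEq α] (ρ σ : Matrix α α ℂ) : ℝ :=
  traceNorm (ρ - σ) / 2

/-- The extension `T ⊗ id_γ` of a linear map on matrices, acting blockwise. -/
def tensorIdMap {α β γ : Type*} (T : Matrix α α ℂ →ₗ[ℂ] Matrix β β ℂ)
    (M : Matrix (α × γ) (α × γ) ℂ) : Matrix (β × γ) (β × γ) ℂ :=
  Matrix.of fun p q => T (Matrix.of fun a a' => M (a, p.2) (a', q.2)) p.1 q.1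

/-- Complete positivity: all the extensions `T ⊗ id_m` preserve positive semidefiniteness. -/
def IsCompletelyPositive {α β : Type*} [Fintype α] [Fintype β]
    (T : Matrix α α ℂ →ₗ[ℂ] Matrix β β ℂ) : Prop :=
  ∀ (m : ℕ) (M : Matrix (α × Fin m) (α × Fin m) ℂ),
    M.PosSemidef → (tensorIdMap T M).PosSemidef

/-- A quantum operation: a trace-preserving, completely positive linear map. -/
def IsQuantumOp {α β : Type*} [Fintype α] [Fintype β]
    (T : Matrix α α ℂ →ₗ[ℂ] Matrix β β ℂ) : Prop :=
  (∀ M, (T M).trace = M.trace) ∧ IsCompletelyPositive T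

/-- The depolarizing channel at rate `η` on `d × d` matrices:
`ρ ↦ (1-η) ρ + (η tr ρ / dim) I`. -/
noncomputable def depolarize (η : ℝ) (d : Type*) [Fintype d] [DecidableEq d] :
    Matrix d d ℂ →ₗ[ℂ] Matrix d d ℂ :=
  (1 - η : ℂ) • LinearMap.id +
    (Matrix.traceLinearMap d ℂ ℂ).smulRight (((η : ℂ) / (Fintype.card d : ℂ)) • (1 : Matrix d d ℂ))

/-- Depolarization at rate `η` of the single qubit `i` of an `n`-qubit system. -/
noncomputable def depolarizeAt (η : ℝ) {n : ℕ} (i : Fin n) : QState n →ₗ[ℂ] QState n where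
  toFun ρ := Matrix.of fun x y =>
    (1 - η : ℂ) * ρ x y +
      (η : ℂ) * (if x i = y i then
        (2 : ℂ)⁻¹ * ∑ b : Fin 2, ρ (Function.update x i b) (Function.update y i b) else 0)
  map_add' ρ σ := by
    ext x y
    simp only [Matrix.of_apply, Matrix.add_apply]
    split
    · rw [Finset.sum_add_distrib]; ring
    · ring
  map_smul' c ρ := by
    ext x y
    simp only [Matrix.of_apply, Matrix.smul_apply, smul_eq_mul, RingHom.id_apply]
    split
    · rw [← Finset.mul_sum]; ring
    · ring

/-- `E_η^{⊗n}`: independent depolarization at rate `η` of each of the `n` qubits. -/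
noncomputable def depolarizeN (η : ℝ) (n : ℕ) : QState n →ₗ[ℂ] QState n :=
  (List.finRange n).foldr (fun i acc => depolarizeAt η i ∘ₗ acc) LinearMap.id

/-- `glue A x z` is the bit string on `n` qubits equal to `x` on `A` and `z` outside `A`. -/
def glue {n : ℕ} (A : Finset (Fin n)) (x : A → Fin 2) (z : {i : Fin n // i ∉ A} → Fin 2) :
    Fin n → Fin 2 :=
  fun i => if h : i ∈ A then x ⟨i, h⟩ else z ⟨i, h⟩

/-- `ptr A ρ = ρ|_A`: the partial trace of an `n`-qubit state over all the qubits outside `A`. -/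
noncomputable def ptr {n : ℕ} (A : Finset (Fin n)) (ρ : QState n) :
    Matrix (A → Fin 2) (A → Fin 2) ℂ :=
  Matrix.of fun x y => ∑ z : ({i : Fin n // i ∉ A} → Fin 2), ρ (glue A x z) (glue A y z)

/-- Given a partition of the qubits `[N]` into the fibers of `f : Fin N → Fin w` and matrices
`M ν` on the blocks, `assemble f M` is the tensor product matrix `⊗_ν M ν` on all `N` qubits. -/
def assemble {N w : ℕ} (f : Fin N → Fin w)
    (M : ∀ ν : Fin w,
      Matrix ({i : Fin N // f i = ν} → Fin 2) ({i : Fin N // f i = ν} → Fin 2) ℂ) :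
    QState N :=
  Matrix.of fun x y => ∏ ν : Fin w, M ν (fun j => x j.1) (fun j => y j.1)

/-- `T` decomposes as the tensor product `⊗_ν Tb ν` of quantum gates of fan-in `≤ k`, with
respect to the partitions of the input qubits `[N]` into the fibers `K_ν` of `f` and of the
output qubits `[N']` into the fibers `L_ν` of `g`. -/
def IsGateDecomp {N N' w : ℕ} (k : ℕ) (T : QState N →ₗ[ℂ] QState N')
    (f : Fin N → Fin w) (g : Fin N' → Fin w)
    (Tb : ∀ ν : Fin w,
      Matrix ({i : Fin N // f i = ν} → Fin 2) ({i : Fin N // f i = ν} → Fin 2) ℂ →ₗ[ℂ]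
        Matrix ({i : Fin N' // g i = ν} → Fin 2) ({i : Fin N' // g i = ν} → Fin 2) ℂ) : Prop :=
  (∀ ν, IsQuantumOp (Tb ν)) ∧
  (∀ ν : Fin w, Fintype.card {i : Fin N // f i = ν} ≤ k) ∧
  (∀ M, T (assemble f M) = assemble g fun ν => Tb ν (M ν))

/-- A quantum circuit over the gate set `G_k` of all quantum gates of fan-in `≤ k`:
a sequence of `depth` levels, with `nq i` qubits at level `i`, where each level operation
decomposes as a tensor product of quantum gates of fan-in `≤ k`. -/
structure QCircuit (k : ℕ) where
  depth : ℕ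
  nq : Fin (depth + 1) → ℕ
  op : ∀ i : Fin depth, QState (nq i.castSucc) →ₗ[ℂ] QState (nq i.succ)
  isGate : ∀ i : Fin depth, ∃ (w : ℕ) (f : Fin (nq i.castSucc) → Fin w)
    (g : Fin (nq i.succ) → Fin w)
    (Tb : ∀ ν : Fin w,
      Matrix ({j : Fin (nq i.castSucc) // f j = ν} → Fin 2)
          ({j : Fin (nq i.castSucc) // f j = ν} → Fin 2) ℂ →ₗ[ℂ]
        Matrix ({j : Fin (nq i.succ) // g j = ν} → Fin 2)
          ({j : Fin (nq i.succ) // g j = ν} → Fin 2) ℂ),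
    IsGateDecomp k (op i) f g Tb

/-- The width of a circuit: the maximum number of qubits at any level. -/
def QCircuit.width {k : ℕ} (Q : QCircuit k) : ℕ := Finset.univ.sup Q.nq

/-- The first `i` levels of the perturbed circuit `Q_η`: the gates `T_0, …, T_{i-1}` interlaced
with depolarizing noise at rate `η` on every qubit between consecutive gates. -/
noncomputable def QCircuit.runP {k : ℕ} (Q : QCircuit k) (η : ℝ) :
    (i : ℕ) → (h : i ≤ Q.depth) →
      (QState (Q.nq ⟨0, Nat.succ_pos _⟩) →ₗ[ℂ] QState (Q.nq ⟨i, Nat.lt_succ_of_le h⟩))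
  | 0, _ => LinearMap.id
  | (i + 1), h =>
      Q.op ⟨i, h⟩ ∘ₗ
        (if i = 0 then LinearMap.id
          else depolarizeN η (Q.nq ⟨i, Nat.lt_succ_of_le (Nat.le_of_succ_le h)⟩)) ∘ₗ
        Q.runP η i (Nat.le_of_succ_le h)

/-- The perturbed circuit `Q_η = T_{t-1} ∘ E_η^{⊗n_{t-1}} ∘ ⋯ ∘ E_η^{⊗n_1} ∘ T_0`. -/
noncomputable def QCircuit.perturbed {k : ℕ} (Q : QCircuit k) (η : ℝ) :
    QState (Q.nq ⟨0, Nat.succ_pos _⟩) →ₗ[ℂ] QState (Q.nq (Fin.last Q.depth)) :=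
  Q.runP η Q.depth le_rfl

end

noncomputable section
namespace Matrix.PosSemidef
open scoped MatrixOrder
variable {α : Type*} [Fintype α] [DecidableEq α] {M : Matrix α α ℂ}

def sqrt (hM : M.PosSemidef) : Matrix α α ℂ :=
  hM.1.eigenvectorUnitary.1 * Matrix.diagonal (((↑) : ℝ → ℂ) ∘ (√·) ∘ hM.1.eigenvalues) *
    (star hM.1.eigenvectorUnitary : Matrix α α ℂ)

lemma sqrt_eq_cfc (hM : M.PosSemidef) : hM.sqrt = CFC.sqrt M := by
  rw [CFC.sqrt_eq_cfc, cfc_nnreal_eq_real _ M hM.nonneg, hM.1.cfc_eq, Matrix.IsHermitian.cfc,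
    Unitary.conjStarAlgAut_apply]
  have h : ∀ i, √(max (hM.1.eigenvalues i) 0) = √(hM.1.eigenvalues i) := fun i => by
    rw [max_eq_left (hM.eigenvalues_nonneg i)]
  unfold sqrt
  simp [Function.comp_def, Real.coe_toNNReal', h]

lemma posSemidef_sqrt (hM : M.PosSemidef) : hM.sqrt.PosSemidef := by
  rw [sqrt_eq_cfc]; exact Matrix.nonneg_iff_posSemidef.mp (CFC.sqrt_nonneg M)

lemma sqrt_mul_self (hM : M.PosSemidef) : hM.sqrt * hM.sqrt = M := by
  rw [sqrt_eq_cfc]; exact CFC.sqrt_mul_sqrt_self M hM.nonneg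

lemma sq_sqrt (hM : M.PosSemidef) : hM.sqrt ^ 2 = M := by
  rw [sq]; exact sqrt_mul_self hM

lemma eq_sqrt_of_sq_eq {S : Matrix α α ℂ} (hS : S.PosSemidef) (hM : M.PosSemidef)
    (h : S ^ 2 = M) : S = hM.sqrt := by
  rw [sqrt_eq_cfc]; exact (CFC.sqrt_unique (by rw [← sq]; exact h) hS.nonneg).symm

end Matrix.PosSemidef
end

noncomputable section
namespace TDAux
open Matrix

open Matrix
variable {α : Type*} [Fintype α] [DecidableEq α]

lemma traceNorm_def' (A : Matrix α α ℂ) :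
    traceNorm A = ((Matrix.posSemidef_conjTranspose_mul_self A).sqrt).trace.re := rfl

lemma traceNorm_eq_of_sq {A S : Matrix α α ℂ} (hS : S.PosSemidef)
    (hsq : S ^ 2 = Aᴴ * A) : traceNorm A = S.trace.re := by
  rw [traceNorm_def', ← hS.eq_sqrt_of_sq_eq (Matrix.posSemidef_conjTranspose_mul_self A) hsq]

lemma conj_mul_conj {U : Matrix α α ℂ} (hUU : star U * U = 1) (X Y : Matrix α α ℂ) :
    (U * X * star U) * (U * Y * star U) = U * (X * Y) * star U := by
  rw [Matrix.mul_assoc (U * X) (star U) (U * Y * star U),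
    ← Matrix.mul_assoc (star U) (U * Y) (star U), ← Matrix.mul_assoc (star U) U Y, hUU,
    Matrix.one_mul, ← Matrix.mul_assoc (U * X) Y (star U), Matrix.mul_assoc U X Y]

lemma traceNorm_herm {A : Matrix α α ℂ} (hA : A.IsHermitian) :
    traceNorm A = ∑ i, |hA.eigenvalues i| := by
  set U : Matrix α α ℂ := (hA.eigenvectorUnitary : Matrix α α ℂ) with hU
  have hUU : star U * U = 1 := Unitary.coe_star_mul_self hA.eigenvectorUnitary
  set D : Matrix α α ℂ := diagonal fun i => ((|hA.eigenvalues i| : ℝ) : ℂ) with hD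
  have hSpsd : (U * D * star U).PosSemidef := by
    apply Matrix.PosSemidef.mul_mul_conjTranspose_same
    refine posSemidef_diagonal_iff.mpr fun i => ?_
    rw [Complex.nonneg_iff]
    simp [abs_nonneg]
  have hsq : (U * D * star U) ^ 2 = Aᴴ * A := by
    rw [pow_two, hA.eq, conj_mul_conj hUU]
    conv_rhs => rw [hA.spectral_theorem, Unitary.conjStarAlgAut_apply]
    rw [conj_mul_conj hUU]
    congr 2
    rw [diagonal_mul_diagonal, diagonal_mul_diagonal]
    refine congrArg diagonal (funext fun i => ?_)
    show ((|hA.eigenvalues i| : ℝ) : ℂ) * ((|hA.eigenvalues i| : ℝ) : ℂ)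
        = ((hA.eigenvalues i : ℝ) : ℂ) * ((hA.eigenvalues i : ℝ) : ℂ)
    rw [← Complex.ofReal_mul, ← Complex.ofReal_mul, abs_mul_abs_self]
  rw [traceNorm_eq_of_sq hSpsd hsq, Matrix.trace_mul_cycle, hUU, Matrix.one_mul,
    Matrix.trace_diagonal, ← Complex.ofReal_sum]
  exact Complex.ofReal_re _

lemma sum_abs_diag_le {A : Matrix α α ℂ} (hA : A.IsHermitian) (V : Matrix.unitaryGroup α ℂ) :
    ∑ i, |((star (V : Matrix α α ℂ) * A * (V : Matrix α α ℂ)) i i).re| ≤ traceNorm A := by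
  set U : Matrix α α ℂ := (hA.eigenvectorUnitary : Matrix α α ℂ) with hU
  have hUU : star U * U = 1 := Unitary.coe_star_mul_self hA.eigenvectorUnitary
  have hVV : (V : Matrix α α ℂ) * star (V : Matrix α α ℂ) = 1 := Unitary.coe_mul_star_self V
  set W : Matrix α α ℂ := star (V : Matrix α α ℂ) * U with hW
  have hWW : star W * W = 1 := by
    rw [hW, Matrix.star_mul, star_star, Matrix.mul_assoc, ← Matrix.mul_assoc (V : Matrix α α ℂ),
      hVV, Matrix.one_mul, hUU]
  have hcol : ∀ j, ∑ i, Complex.normSq (W i j) = 1 := by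
    intro j
    have h2 : (star W * W) j j = ((∑ i, Complex.normSq (W i j) : ℝ) : ℂ) := by
      push_cast
      simp [Matrix.mul_apply, Matrix.star_apply, mul_comm, Complex.star_def, Complex.mul_conj]
    have h1 : ((∑ i, Complex.normSq (W i j) : ℝ) : ℂ) = 1 := by
      rw [← h2, hWW]; exact Matrix.one_apply_eq j
    exact_mod_cast h1
  have hdiag : ∀ i, ((star (V : Matrix α α ℂ) * A * (V : Matrix α α ℂ)) i i).re
      = ∑ j, Complex.normSq (W i j) * hA.eigenvalues j := by
    intro i
    have h0 : star (V : Matrix α α ℂ) * A * (V : Matrix α α ℂ)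
        = W * diagonal ((RCLike.ofReal : ℝ → ℂ) ∘ hA.eigenvalues) * star W := by
      rw [hW, Matrix.star_mul, star_star]
      conv_lhs => rw [hA.spectral_theorem, Unitary.conjStarAlgAut_apply]
      rw [← hU]
      simp only [Matrix.mul_assoc]
    rw [h0]
    have h1 : (W * diagonal ((RCLike.ofReal : ℝ → ℂ) ∘ hA.eigenvalues) * star W) i i
        = ((∑ j, Complex.normSq (W i j) * hA.eigenvalues j : ℝ) : ℂ) := by
      rw [Matrix.mul_apply, Complex.ofReal_sum]
      refine Finset.sum_congr rfl fun j _ => ?_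
      rw [Matrix.mul_diagonal, Matrix.star_apply, Function.comp_apply, Complex.ofReal_mul]
      rw [show W i j * (RCLike.ofReal (hA.eigenvalues j) : ℂ) * star (W i j)
          = W i j * star (W i j) * (RCLike.ofReal (hA.eigenvalues j) : ℂ) by ring]
      rw [Complex.star_def, Complex.mul_conj]
      rfl
    rw [h1, Complex.ofReal_re]
  calc ∑ i, |((star (V : Matrix α α ℂ) * A * (V : Matrix α α ℂ)) i i).re|
      ≤ ∑ i, ∑ j, Complex.normSq (W i j) * |hA.eigenvalues j| := by
        refine Finset.sum_le_sum fun i _ => ?_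
        rw [hdiag i]
        refine (Finset.abs_sum_le_sum_abs _ _).trans (le_of_eq ?_)
        refine Finset.sum_congr rfl fun j _ => ?_
        rw [abs_mul, abs_of_nonneg (Complex.normSq_nonneg _)]
    _ = ∑ j, (∑ i, Complex.normSq (W i j)) * |hA.eigenvalues j| := by
        rw [Finset.sum_comm]
        exact Finset.sum_congr rfl fun j _ => (Finset.sum_mul _ _ _).symm
    _ = ∑ j, |hA.eigenvalues j| := by simp [hcol]
    _ = traceNorm A := (traceNorm_herm hA).symm

lemma traceNorm_add_le {A B : Matrix α α ℂ} (hA : A.IsHermitian) (hB : B.IsHermitian) :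
    traceNorm (A + B) ≤ traceNorm A + traceNorm B := by
  have hC : (A + B).IsHermitian := hA.add hB
  set V := hC.eigenvectorUnitary with hV
  have hdg : star (V : Matrix α α ℂ) * (A + B) * (V : Matrix α α ℂ)
      = diagonal ((RCLike.ofReal : ℝ → ℂ) ∘ hC.eigenvalues) := by
    have := hC.conjStarAlgAut_star_eigenvectorUnitary
    rwa [Unitary.conjStarAlgAut_apply, Unitary.coe_star, star_star] at this
  have hsplit : ∀ i, hC.eigenvalues i
      = ((star (V : Matrix α α ℂ) * A * (V : Matrix α α ℂ)) i i).re
        + ((star (V : Matrix α α ℂ) * B * (V : Matrix α α ℂ)) i i).re := by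
    intro i
    have h3 : (diagonal ((RCLike.ofReal : ℝ → ℂ) ∘ hC.eigenvalues)) i i
        = (star (V : Matrix α α ℂ) * A * (V : Matrix α α ℂ)) i i
          + (star (V : Matrix α α ℂ) * B * (V : Matrix α α ℂ)) i i := by
      rw [← hdg, Matrix.mul_add, Matrix.add_mul, Matrix.add_apply]
    have h2 := congrArg Complex.re h3
    simpa using h2
  rw [traceNorm_herm hC]
  calc ∑ i, |hC.eigenvalues i|
      ≤ ∑ i, (|((star (V : Matrix α α ℂ) * A * (V : Matrix α α ℂ)) i i).re|
          + |((star (V : Matrix α α ℂ) * B * (V : Matrix α α ℂ)) i i).re|) := by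
        refine Finset.sum_le_sum fun i _ => ?_
        rw [hsplit i]; exact abs_add_le _ _
    _ = _ + _ := Finset.sum_add_distrib
    _ ≤ traceNorm A + traceNorm B :=
        add_le_add (sum_abs_diag_le hA V) (sum_abs_diag_le hB V)

lemma traceNorm_zero : traceNorm (0 : Matrix α α ℂ) = 0 := by
  have h : (0 : Matrix α α ℂ) ^ 2 = (0 : Matrix α α ℂ)ᴴ * 0 := by simp [pow_two]
  rw [traceNorm_eq_of_sq Matrix.PosSemidef.zero h, Matrix.trace_zero]
  rfl

lemma isHermitian_sum {ι : Type*} (s : Finset ι) (f : ι → Matrix α α ℂ)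
    (hf : ∀ i ∈ s, (f i).IsHermitian) : (∑ i ∈ s, f i).IsHermitian := by
  induction s using Finset.cons_induction with
  | empty => simpa using Matrix.isHermitian_zero
  | cons a s ha ih =>
      rw [Finset.sum_cons]
      exact (hf a (Finset.mem_cons_self a s)).add (ih fun i hi => hf i (Finset.mem_cons_of_mem hi))

lemma traceNorm_sum_le {ι : Type*} (s : Finset ι) (f : ι → Matrix α α ℂ)
    (hf : ∀ i ∈ s, (f i).IsHermitian) :
    traceNorm (∑ i ∈ s, f i) ≤ ∑ i ∈ s, traceNorm (f i) := by
  induction s using Finset.cons_induction with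
  | empty => simp [traceNorm_zero]
  | cons a s ha ih =>
      rw [Finset.sum_cons, Finset.sum_cons]
      refine (traceNorm_add_le (hf a (Finset.mem_cons_self a s))
        (isHermitian_sum s f fun i hi => hf i (Finset.mem_cons_of_mem hi))).trans ?_
      exact add_le_add_right (ih fun i hi => hf i (Finset.mem_cons_of_mem hi)) _

lemma traceNorm_real_smul (A : Matrix α α ℂ) {r : ℝ} (hr : 0 ≤ r) :
    traceNorm (((r : ℂ)) • A) = r * traceNorm A := by
  have hS := Matrix.posSemidef_conjTranspose_mul_self A
  have hpsd : ((r : ℂ) • hS.sqrt).PosSemidef := by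
    exact hS.posSemidef_sqrt.smul (Complex.zero_le_real.mpr hr)
  have hsq : ((r : ℂ) • hS.sqrt) ^ 2 = ((r : ℂ) • A)ᴴ * ((r : ℂ) • A) := by
    rw [smul_pow, hS.sq_sqrt, Matrix.conjTranspose_smul, Complex.star_def, Complex.conj_ofReal,
      Matrix.smul_mul, Matrix.mul_smul, smul_smul, pow_two]
  rw [traceNorm_eq_of_sq hpsd hsq, Matrix.trace_smul, smul_eq_mul, Complex.mul_re]
  simp [traceNorm_def']



lemma posSemidef_real_smul {M : Matrix α α ℂ} (hM : M.PosSemidef) {r : ℝ} (hr : 0 ≤ r) :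
    (((r : ℂ)) • M).PosSemidef := by
  exact hM.smul (Complex.zero_le_real.mpr hr)

/- ### part 2 -/
section P2


/-! ### generic sum lemmas -/

lemma update_splitAt {ι : Type*} [DecidableEq ι] (w : ι)
    (p : Fin 2 × ({j : ι // j ≠ w} → Fin 2)) (v : Fin 2) :
    Function.update ((Equiv.funSplitAt w (Fin 2)).symm p) w v
      = (Equiv.funSplitAt w (Fin 2)).symm (v, p.2) := by
  funext j
  rcases eq_or_ne j w with rfl | hj
  · simp [Equiv.funSplitAt, Equiv.piSplitAt]
  · simp [Function.update_of_ne hj, Equiv.funSplitAt, Equiv.piSplitAt, hj]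

lemma sum_update_pair {ι : Type*} [Fintype ι] [DecidableEq ι] (w : ι)
    (f : (ι → Fin 2) → ℂ) :
    ∑ v : Fin 2, ∑ z : ι → Fin 2, f (Function.update z w v) = 2 * ∑ z : ι → Fin 2, f z := by
  set e := Equiv.funSplitAt w (Fin 2) with he
  have h1 : ∀ v : Fin 2, ∑ z : ι → Fin 2, f (Function.update z w v)
      = ∑ p : Fin 2 × ({j : ι // j ≠ w} → Fin 2), f (e.symm (v, p.2)) := by
    intro v
    refine Fintype.sum_equiv e _ _ fun z => congrArg f ?_
    have h := update_splitAt w (e z) v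
    rwa [Equiv.symm_apply_apply] at h
  have h2 : ∑ p : Fin 2 × ({j : ι // j ≠ w} → Fin 2), f (e.symm p)
      = ∑ z : ι → Fin 2, f z := Fintype.sum_equiv e.symm _ _ fun p => rfl
  calc ∑ v : Fin 2, ∑ z : ι → Fin 2, f (Function.update z w v)
      = ∑ v : Fin 2, ∑ p : Fin 2 × ({j : ι // j ≠ w} → Fin 2), f (e.symm (v, p.2)) :=
        Finset.sum_congr rfl fun v _ => h1 v
    _ = ∑ v : Fin 2, ∑ u : Fin 2, ∑ t : {j : ι // j ≠ w} → Fin 2, f (e.symm (v, t)) :=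
        Finset.sum_congr rfl fun v _ => Fintype.sum_prod_type _
    _ = ∑ v : Fin 2, (2 : ℂ) * ∑ t : {j : ι // j ≠ w} → Fin 2, f (e.symm (v, t)) := by
        refine Finset.sum_congr rfl fun v _ => ?_
        rw [Finset.sum_const, Finset.card_univ, Fintype.card_fin, nsmul_eq_mul]
        norm_num
    _ = 2 * ∑ p : Fin 2 × ({j : ι // j ≠ w} → Fin 2), f (e.symm p) := by
        rw [Fintype.sum_prod_type, Finset.mul_sum]
    _ = 2 * ∑ z : ι → Fin 2, f z := by rw [h2]

lemma sum_eval_point {ι : Type*} [Fintype ι] [DecidableEq ι] (w : ι) (g : Fin 2 → ℂ) :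
    ∑ b : ι → Fin 2, g (b w) = 2 ^ (Fintype.card ι - 1) * ∑ v : Fin 2, g v := by
  set e := Equiv.funSplitAt w (Fin 2) with he
  have h0 : ∑ b : ι → Fin 2, g (b w) = ∑ p : Fin 2 × ({j : ι // j ≠ w} → Fin 2), g p.1 :=
    Fintype.sum_equiv e _ _ fun b => rfl
  have hcard : Fintype.card ({j : ι // j ≠ w} → Fin 2) = 2 ^ (Fintype.card ι - 1) := by
    rw [Fintype.card_fun, Fintype.card_fin]
    congr 1
    exact Fintype.card_subtype_compl _ |>.trans (by rw [Fintype.card_subtype_eq])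
  rw [h0, Fintype.sum_prod_type]
  rw [Finset.mul_sum]
  refine Finset.sum_congr rfl fun v _ => ?_
  show ∑ _y : {j : ι // j ≠ w} → Fin 2, g v = _
  rw [Finset.sum_const, Finset.card_univ, hcard, nsmul_eq_mul]
  push_cast
  ring

/-! ### glue lemmas -/

variable {n : ℕ}

lemma glue_mem {A : Finset (Fin n)} (x : A → Fin 2) (z : {i : Fin n // i ∉ A} → Fin 2)
    {i : Fin n} (h : i ∈ A) : glue A x z i = x ⟨i, h⟩ := dif_pos h

lemma glue_not_mem {A : Finset (Fin n)} (x : A → Fin 2) (z : {i : Fin n // i ∉ A} → Fin 2)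
    {i : Fin n} (h : i ∉ A) : glue A x z i = z ⟨i, h⟩ := dif_neg h

lemma update_glue_mem {B : Finset (Fin n)} (x : B → Fin 2) (z : {i : Fin n // i ∉ B} → Fin 2)
    {i : Fin n} (hi : i ∈ B) (c : Fin 2) :
    Function.update (glue B x z) i c = glue B (Function.update x ⟨i, hi⟩ c) z := by
  funext j
  rcases eq_or_ne j i with rfl | hj
  · rw [Function.update_self, glue_mem _ _ hi, Function.update_self]
  · rw [Function.update_of_ne hj]
    by_cases hjB : j ∈ B
    · rw [glue_mem _ _ hjB, glue_mem _ _ hjB,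
        Function.update_of_ne (by simpa [Subtype.ext_iff] using hj)]
    · rw [glue_not_mem _ _ hjB, glue_not_mem _ _ hjB]

lemma update_glue_not_mem {B : Finset (Fin n)} (x : B → Fin 2) (z : {i : Fin n // i ∉ B} → Fin 2)
    {i : Fin n} (hi : i ∉ B) (c : Fin 2) :
    Function.update (glue B x z) i c = glue B x (Function.update z ⟨i, hi⟩ c) := by
  funext j
  rcases eq_or_ne j i with rfl | hj
  · rw [Function.update_self, glue_not_mem _ _ hi, Function.update_self]
  · rw [Function.update_of_ne hj]
    by_cases hjB : j ∈ B
    · rw [glue_mem _ _ hjB, glue_mem _ _ hjB]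
    · rw [glue_not_mem _ _ hjB, glue_not_mem _ _ hjB,
        Function.update_of_ne (by simpa [Subtype.ext_iff] using hj)]

/-! ### the pinching maps `ΦT` -/

def ovr (B S : Finset (Fin n)) (x b : B → Fin 2) : B → Fin 2 :=
  fun j => if j.1 ∈ S then b j else x j

def ΦT (B S : Finset (Fin n)) (X : Matrix (B → Fin 2) (B → Fin 2) ℂ) :
    Matrix (B → Fin 2) (B → Fin 2) ℂ :=
  Matrix.of fun x y => if ∀ j : B, j.1 ∈ S → x j = y j then
    (2:ℂ)⁻¹ ^ B.card * ∑ b : B → Fin 2, X (ovr B S x b) (ovr B S y b) else 0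

lemma ΦT_apply (B S : Finset (Fin n)) (X : Matrix (B → Fin 2) (B → Fin 2) ℂ)
    (x y : B → Fin 2) :
    ΦT B S X x y = if ∀ j : B, j.1 ∈ S → x j = y j then
      (2:ℂ)⁻¹ ^ B.card * ∑ b : B → Fin 2, X (ovr B S x b) (ovr B S y b) else 0 := rfl

lemma two_inv_pow_mul_two_pow {k m : ℕ} (h : m ≤ k) :
    (2:ℂ)⁻¹ ^ k * 2 ^ m = 2⁻¹ ^ (k - m) := by
  have h2 : (2:ℂ) ≠ 0 := two_ne_zero
  rw [show k = (k - m) + m from (Nat.sub_add_cancel h).symm, pow_add, mul_assoc,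
    show (2:ℂ)⁻¹ ^ m * 2 ^ m = 1 from by rw [inv_pow, inv_mul_cancel₀ (pow_ne_zero m h2)],
    mul_one, Nat.add_sub_cancel]

lemma ΦT_empty (B : Finset (Fin n)) (X : Matrix (B → Fin 2) (B → Fin 2) ℂ) :
    ΦT B ∅ X = X := by
  ext x y
  rw [ΦT_apply, if_pos (fun j hj => absurd hj (Finset.notMem_empty _))]
  have h1 : ∀ b : B → Fin 2, X (ovr B ∅ x b) (ovr B ∅ y b) = X x y := by
    intro b
    have hx : ovr B ∅ x b = x := by funext j; simp [ovr]
    have hy : ovr B ∅ y b = y := by funext j; simp [ovr]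
    rw [hx, hy]
  rw [Finset.sum_congr rfl fun b _ => h1 b, Finset.sum_const, Finset.card_univ, nsmul_eq_mul,
    Fintype.card_fun, Fintype.card_fin, Fintype.card_coe, ← mul_assoc]
  push_cast
  rw [show ((2:ℂ)⁻¹ ^ B.card * 2 ^ B.card) = 2⁻¹ ^ (B.card - B.card) from
    two_inv_pow_mul_two_pow le_rfl, Nat.sub_self, pow_zero, one_mul]

lemma ΦT_smul (B S : Finset (Fin n)) (c : ℂ) (X : Matrix (B → Fin 2) (B → Fin 2) ℂ) :
    ΦT B S (c • X) = c • ΦT B S X := by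
  ext x y
  rw [Matrix.smul_apply, ΦT_apply, ΦT_apply]
  split
  · simp only [Matrix.smul_apply, smul_eq_mul]
    rw [← Finset.mul_sum]
    ring
  · rw [smul_zero]

lemma ΦT_sum {ι : Type*} (B S : Finset (Fin n)) (s : Finset ι)
    (f : ι → Matrix (B → Fin 2) (B → Fin 2) ℂ) :
    ΦT B S (∑ i ∈ s, f i) = ∑ i ∈ s, ΦT B S (f i) := by
  ext x y
  rw [Matrix.sum_apply, ΦT_apply]
  split_ifs with h
  · simp only [Matrix.sum_apply]
    rw [Finset.sum_comm, Finset.mul_sum]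
    exact Finset.sum_congr rfl fun i _ => ((ΦT_apply B S (f i) x y).trans (if_pos h)).symm
  · symm
    refine Finset.sum_eq_zero fun i _ => ?_
    rw [ΦT_apply, if_neg h]

lemma ΦT_singleton {B : Finset (Fin n)} {i : Fin n} (hi : i ∈ B)
    (X : Matrix (B → Fin 2) (B → Fin 2) ℂ) :
    ΦT B {i} X = Matrix.of fun x y => if x ⟨i, hi⟩ = y ⟨i, hi⟩ then
      (2:ℂ)⁻¹ * ∑ c : Fin 2, X (Function.update x ⟨i, hi⟩ c) (Function.update y ⟨i, hi⟩ c)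
      else 0 := by
  have hBpos : 1 ≤ B.card := Finset.card_pos.mpr ⟨i, hi⟩
  ext x y
  rw [ΦT_apply, Matrix.of_apply]
  have hguard : (∀ j : B, j.1 ∈ ({i} : Finset (Fin n)) → x j = y j) ↔
      x ⟨i, hi⟩ = y ⟨i, hi⟩ := by
    constructor
    · intro h; exact h ⟨i, hi⟩ (Finset.mem_singleton_self i)
    · intro h j hj
      have hj' : j = ⟨i, hi⟩ := Subtype.ext (Finset.mem_singleton.mp hj)
      rwa [hj']
  rw [if_congr hguard rfl rfl]
  by_cases hc : x ⟨i, hi⟩ = y ⟨i, hi⟩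
  · rw [if_pos hc, if_pos hc]
    have hovr : ∀ u b : B → Fin 2,
        ovr B {i} u b = Function.update u ⟨i, hi⟩ (b ⟨i, hi⟩) := by
      intro u b
      funext j
      rcases eq_or_ne j ⟨i, hi⟩ with rfl | hj
      · simp [ovr]
      · have hj1 : j.1 ∉ ({i} : Finset (Fin n)) := by
          simp only [Finset.mem_singleton]
          exact fun h' => hj (Subtype.ext h')
        simp [ovr, hj1, Function.update_of_ne hj]
    rw [Finset.sum_congr rfl fun b _ => by rw [hovr x b, hovr y b]]
    rw [sum_eval_point (⟨i, hi⟩ : ↥B)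
      (fun c => X (Function.update x ⟨i, hi⟩ c) (Function.update y ⟨i, hi⟩ c)), ← mul_assoc]
    rw [Fintype.card_coe]
    rw [two_inv_pow_mul_two_pow (Nat.sub_le _ _),
      show B.card - (B.card - 1) = 1 from by omega, pow_one]
  · rw [if_neg hc, if_neg hc]

lemma ΦT_insert {B : Finset (Fin n)} {i : Fin n} (hi : i ∈ B) {T : Finset (Fin n)}
    (hiT : i ∉ T) (X : Matrix (B → Fin 2) (B → Fin 2) ℂ) :
    ΦT B {i} (ΦT B T X) = ΦT B (insert i T) X := by
  set w : ↥B := ⟨i, hi⟩ with hw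
  rw [ΦT_singleton hi]
  ext x y
  rw [Matrix.of_apply, ΦT_apply]
  have hne : ∀ j : ↥B, j.1 ∈ T → j ≠ w := by
    intro j hj hjw
    rw [hjw] at hj
    exact hiT hj
  have hguardT : ∀ c : Fin 2,
      (∀ j : ↥B, j.1 ∈ T → Function.update x w c j = Function.update y w c j) ↔
      (∀ j : ↥B, j.1 ∈ T → x j = y j) := by
    intro c
    constructor <;> intro h j hj
    · have h2 := h j hj
      rwa [Function.update_of_ne (hne j hj), Function.update_of_ne (hne j hj)] at h2
    · rw [Function.update_of_ne (hne j hj), Function.update_of_ne (hne j hj)]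
      exact h j hj
  have hovr : ∀ (u : B → Fin 2) (c : Fin 2) (b : B → Fin 2),
      ovr B T (Function.update u w c) b = ovr B (insert i T) u (Function.update b w c) := by
    intro u c b
    funext j
    rcases eq_or_ne j w with rfl | hj
    · have h1 : (w : Fin n) ∉ T := hiT
      simp only [ovr, hw, if_neg h1, if_neg hiT, Function.update_self, if_pos (Finset.mem_insert_self i T)]
    · by_cases hjT : j.1 ∈ T
      · simp only [ovr, if_pos hjT, if_pos (Finset.mem_insert_of_mem hjT),
          Function.update_of_ne hj]
      · have h2 : j.1 ∉ insert i T := by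
          rw [Finset.mem_insert]
          rintro (h3 | h3)
          · exact hj (Subtype.ext h3)
          · exact hjT h3
        simp only [ovr, if_neg hjT, if_neg h2, Function.update_of_ne hj]
  by_cases hC : ∀ j : ↥B, j.1 ∈ insert i T → x j = y j
  · rw [if_pos hC]
    have hcw : x w = y w := hC w (Finset.mem_insert_self i T)
    have hcT : ∀ j : ↥B, j.1 ∈ T → x j = y j := fun j hj => hC j (Finset.mem_insert_of_mem hj)
    rw [if_pos hcw]
    have hterm : ∀ c : Fin 2,
        ΦT B T X (Function.update x w c) (Function.update y w c)
          = (2:ℂ)⁻¹ ^ B.card * ∑ b : B → Fin 2,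
              X (ovr B (insert i T) x (Function.update b w c))
                (ovr B (insert i T) y (Function.update b w c)) := by
      intro c
      rw [ΦT_apply, if_pos ((hguardT c).mpr hcT)]
      rw [Finset.sum_congr rfl fun b _ => by rw [hovr x c b, hovr y c b]]
    rw [Finset.sum_congr rfl fun c _ => hterm c, ← Finset.mul_sum]
    rw [sum_update_pair w
      (fun b => X (ovr B (insert i T) x b) (ovr B (insert i T) y b))]
    ring
  · rw [if_neg hC]
    by_cases hcw : x w = y w
    · rw [if_pos hcw]
      have hcT : ¬ ∀ j : ↥B, j.1 ∈ T → x j = y j := by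
        intro h
        refine hC fun j hj => ?_
        rcases Finset.mem_insert.mp hj with h1 | h2
        · have : j = w := Subtype.ext h1
          rw [this]; exact hcw
        · exact h j h2
      have hterm : ∀ c : Fin 2,
          ΦT B T X (Function.update x w c) (Function.update y w c) = 0 := by
        intro c
        rw [ΦT_apply, if_neg (fun h => hcT ((hguardT c).mp h))]
      rw [Finset.sum_congr rfl fun c _ => hterm c, Finset.sum_const, smul_zero, mul_zero]
    · rw [if_neg hcw]

/-! ### peeling one depolarization through the partial trace -/

lemma ptr_depolarizeAt_not_mem (η : ℝ) {i : Fin n} {B : Finset (Fin n)} (hi : i ∉ B)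
    (ρ : QState n) : ptr B (depolarizeAt η i ρ) = ptr B ρ := by
  ext x y
  show ∑ z : {j : Fin n // j ∉ B} → Fin 2,
      ((1 - η : ℂ) * ρ (glue B x z) (glue B y z) +
        (η : ℂ) * (if glue B x z i = glue B y z i then
          (2 : ℂ)⁻¹ * ∑ b : Fin 2, ρ (Function.update (glue B x z) i b)
            (Function.update (glue B y z) i b) else 0))
      = ∑ z : {j : Fin n // j ∉ B} → Fin 2, ρ (glue B x z) (glue B y z)
  have hterm : ∀ z : {j : Fin n // j ∉ B} → Fin 2,
      (1 - η : ℂ) * ρ (glue B x z) (glue B y z) +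
        (η : ℂ) * (if glue B x z i = glue B y z i then
          (2 : ℂ)⁻¹ * ∑ b : Fin 2, ρ (Function.update (glue B x z) i b)
            (Function.update (glue B y z) i b) else 0)
      = (1 - η : ℂ) * ρ (glue B x z) (glue B y z) +
        (η : ℂ) * ((2 : ℂ)⁻¹ * ∑ b : Fin 2,
          ρ (glue B x (Function.update z ⟨i, hi⟩ b)) (glue B y (Function.update z ⟨i, hi⟩ b))) := by
    intro z
    rw [glue_not_mem x z hi, glue_not_mem y z hi, if_pos rfl]
    congr 2
    refine congrArg _ (Finset.sum_congr rfl fun b _ => ?_)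
    rw [update_glue_not_mem x z hi b, update_glue_not_mem y z hi b]
  rw [Finset.sum_congr rfl fun z _ => hterm z]
  rw [Finset.sum_add_distrib, ← Finset.mul_sum, ← Finset.mul_sum]
  have hswap : ∑ z : {j : Fin n // j ∉ B} → Fin 2, (2 : ℂ)⁻¹ * ∑ b : Fin 2,
      ρ (glue B x (Function.update z ⟨i, hi⟩ b)) (glue B y (Function.update z ⟨i, hi⟩ b))
      = (2 : ℂ)⁻¹ * ∑ b : Fin 2, ∑ z : {j : Fin n // j ∉ B} → Fin 2,
          ρ (glue B x (Function.update z ⟨i, hi⟩ b)) (glue B y (Function.update z ⟨i, hi⟩ b)) := by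
    rw [← Finset.mul_sum, Finset.sum_comm]
  rw [hswap, sum_update_pair (⟨i, hi⟩ : {j : Fin n // j ∉ B})
    (fun z => ρ (glue B x z) (glue B y z))]
  ring

lemma ptr_depolarizeAt_mem (η : ℝ) {i : Fin n} {B : Finset (Fin n)} (hi : i ∈ B)
    (ρ : QState n) :
    ptr B (depolarizeAt η i ρ)
      = (1 - (η:ℂ)) • ptr B ρ + (η:ℂ) • ΦT B {i} (ptr B ρ) := by
  rw [ΦT_singleton hi]
  ext x y
  show ∑ z : {j : Fin n // j ∉ B} → Fin 2,
      ((1 - η : ℂ) * ρ (glue B x z) (glue B y z) +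
        (η : ℂ) * (if glue B x z i = glue B y z i then
          (2 : ℂ)⁻¹ * ∑ b : Fin 2, ρ (Function.update (glue B x z) i b)
            (Function.update (glue B y z) i b) else 0))
      = (1 - (η:ℂ)) * ptr B ρ x y + (η:ℂ) *
          (if x ⟨i, hi⟩ = y ⟨i, hi⟩ then
            (2:ℂ)⁻¹ * ∑ c : Fin 2, ptr B ρ (Function.update x ⟨i, hi⟩ c)
              (Function.update y ⟨i, hi⟩ c) else 0)
  have hterm : ∀ z : {j : Fin n // j ∉ B} → Fin 2,
      (1 - η : ℂ) * ρ (glue B x z) (glue B y z) +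
        (η : ℂ) * (if glue B x z i = glue B y z i then
          (2 : ℂ)⁻¹ * ∑ b : Fin 2, ρ (Function.update (glue B x z) i b)
            (Function.update (glue B y z) i b) else 0)
      = (1 - η : ℂ) * ρ (glue B x z) (glue B y z) +
        (η : ℂ) * (if x ⟨i, hi⟩ = y ⟨i, hi⟩ then
          (2 : ℂ)⁻¹ * ∑ b : Fin 2, ρ (glue B (Function.update x ⟨i, hi⟩ b) z)
            (glue B (Function.update y ⟨i, hi⟩ b) z) else 0) := by
    intro z
    rw [glue_mem x z hi, glue_mem y z hi]
    congr 2
    refine if_congr Iff.rfl (congrArg _ (Finset.sum_congr rfl fun b _ => ?_)) rfl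
    rw [update_glue_mem x z hi b, update_glue_mem y z hi b]
  rw [Finset.sum_congr rfl fun z _ => hterm z, Finset.sum_add_distrib, ← Finset.mul_sum]
  congr 1
  by_cases hc : x ⟨i, hi⟩ = y ⟨i, hi⟩
  · rw [if_pos hc,
      Finset.sum_congr rfl fun z _ => congrArg (fun t => (η:ℂ) * t) (if_pos hc)]
    rw [← Finset.mul_sum, ← Finset.mul_sum, Finset.sum_comm]
    rfl
  · rw [if_neg hc, mul_zero,
      Finset.sum_congr rfl fun z _ => congrArg (fun t => (η:ℂ) * t) (if_neg hc)]
    simp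

/-! ### folding all depolarizations through the partial trace -/

def Dl (η : ℝ) (B : Finset (Fin n)) :
    List (Fin n) → Matrix (B → Fin 2) (B → Fin 2) ℂ → Matrix (B → Fin 2) (B → Fin 2) ℂ
  | [], X => X
  | i :: t, X =>
      if i ∈ B then (1 - (η:ℂ)) • Dl η B t X + (η:ℂ) • ΦT B {i} (Dl η B t X)
      else Dl η B t X

lemma stageA (η : ℝ) (B : Finset (Fin n)) (l : List (Fin n)) (ρ : QState n) :
    ptr B ((l.foldr (fun i acc => depolarizeAt η i ∘ₗ acc) LinearMap.id) ρ)
      = Dl η B l (ptr B ρ) := by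
  induction l with
  | nil => rfl
  | cons i t ih =>
      rw [List.foldr_cons, LinearMap.comp_apply]
      by_cases hi : i ∈ B
      · rw [ptr_depolarizeAt_mem η hi, ih]
        simp only [Dl, if_pos hi]
      · rw [ptr_depolarizeAt_not_mem η hi, ih]
        simp only [Dl, if_neg hi]

lemma stageB (η : ℝ) (B : Finset (Fin n)) (l : List (Fin n)) (hl : l.Nodup)
    (X : Matrix (B → Fin 2) (B → Fin 2) ℂ) :
    Dl η B l X = ∑ S ∈ (l.toFinset ∩ B).powerset,
      ((η:ℂ) ^ ((l.toFinset ∩ B).card - S.card) * (1 - (η:ℂ)) ^ S.card) •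
        ΦT B ((l.toFinset ∩ B) \ S) X := by
  induction l with
  | nil =>
      simp only [List.toFinset_nil, Finset.empty_inter, Finset.powerset_empty,
        Finset.sum_singleton, Finset.card_empty, pow_zero, one_mul, one_smul,
        Finset.empty_sdiff, Nat.sub_self]
      rw [ΦT_empty]
      rfl
  | cons i t ih =>
      have hit : i ∉ t := (List.nodup_cons.mp hl).1
      have ht : t.Nodup := (List.nodup_cons.mp hl).2
      by_cases hi : i ∈ B
      · have hM : (i :: t).toFinset ∩ B = insert i (t.toFinset ∩ B) := by
          rw [List.toFinset_cons, Finset.insert_inter_of_mem hi]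
        have hiM : i ∉ t.toFinset ∩ B := by
          simp [List.mem_toFinset, hit]
        have hDl : Dl η B (i :: t) X
            = (1 - (η:ℂ)) • Dl η B t X + (η:ℂ) • ΦT B {i} (Dl η B t X) := by
          simp only [Dl, if_pos hi]
        rw [hDl, ih ht, hM, Finset.sum_powerset_insert hiM]
        set M := t.toFinset ∩ B with hMdef
        rw [ΦT_sum, Finset.smul_sum, Finset.smul_sum]
        rw [add_comm]
        congr 1
        · -- η • ΦT{i} part matches S ↦ S (not containing i)
          refine Finset.sum_congr rfl fun S hS => ?_
          have hSM : S ⊆ M := Finset.mem_powerset.mp hS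
          have hcard : S.card ≤ M.card := Finset.card_le_card hSM
          have hiS : i ∉ S := fun h => hiM (hSM h)
          have hins : insert i M \ S = insert i (M \ S) :=
            Finset.insert_sdiff_of_notMem _ hiS
          have hiMS : i ∉ M \ S := fun h => hiM (Finset.mem_sdiff.mp h).1
          rw [ΦT_smul, smul_smul, hins, ← ΦT_insert hi hiMS X]
          congr 1
          rw [Finset.card_insert_of_notMem hiM, Nat.succ_sub hcard, pow_succ]
          ring
        · -- (1-η) part matches S ↦ insert i S
          refine Finset.sum_congr rfl fun S hS => ?_
          have hSM : S ⊆ M := Finset.mem_powerset.mp hS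
          have hiS : i ∉ S := fun h => hiM (hSM h)
          have h1 : insert i M \ insert i S = M \ S := by
            ext j
            simp only [Finset.mem_sdiff, Finset.mem_insert, not_or]
            constructor
            · rintro ⟨h2 | h2, h3, h4⟩
              · exact absurd h2 h3
              · exact ⟨h2, h4⟩
            · rintro ⟨h2, h3⟩
              exact ⟨Or.inr h2, fun h4 => hiM (h4 ▸ h2), h3⟩
          rw [smul_smul, h1]
          congr 1
          rw [Finset.card_insert_of_notMem hiM, Finset.card_insert_of_notMem hiS,
            Nat.succ_sub_succ, pow_succ]
          ring
      · have hM : (i :: t).toFinset ∩ B = t.toFinset ∩ B := by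
          rw [List.toFinset_cons, Finset.insert_inter_of_notMem hi]
        have hDl : Dl η B (i :: t) X = Dl η B t X := by
          simp only [Dl, if_neg hi]
        rw [hDl, ih ht, hM]

lemma key_decomp (η : ℝ) (B : Finset (Fin n)) (ρ : QState n) :
    ptr B (depolarizeN η n ρ) = ∑ S ∈ B.powerset,
      ((η:ℂ) ^ (B.card - S.card) * (1 - (η:ℂ)) ^ S.card) • ΦT B (B \ S) (ptr B ρ) := by
  have h0 : ptr B (depolarizeN η n ρ)
      = Dl η B (List.finRange n) (ptr B ρ) := stageA η B (List.finRange n) ρ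
  rw [h0, stageB η B (List.finRange n) (List.nodup_finRange n) (ptr B ρ)]
  have h1 : (List.finRange n).toFinset ∩ B = B := by
    rw [List.toFinset_finRange, Finset.univ_inter]
  rw [h1]

/-! ### the embedding `embA` -/

def resx (A B : Finset (Fin n)) (x : B → Fin 2) : A → Fin 2 :=
  fun a => if h : a.1 ∈ B then x ⟨a.1, h⟩ else 0

def embA (A B : Finset (Fin n)) (X : Matrix (A → Fin 2) (A → Fin 2) ℂ) :
    Matrix (B → Fin 2) (B → Fin 2) ℂ :=
  Matrix.of fun x y => if ∀ j : B, j.1 ∉ A → x j = y j then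
    (2:ℂ)⁻¹ ^ (B.card - A.card) * X (resx A B x) (resx A B y) else 0

lemma embA_apply (A B : Finset (Fin n)) (X : Matrix (A → Fin 2) (A → Fin 2) ℂ)
    (x y : B → Fin 2) :
    embA A B X x y = if ∀ j : B, j.1 ∉ A → x j = y j then
      (2:ℂ)⁻¹ ^ (B.card - A.card) * X (resx A B x) (resx A B y) else 0 := rfl

def eB {A B : Finset (Fin n)} (hAB : A ⊆ B) :
    (B → Fin 2) ≃ ((A → Fin 2) × ({j : ↥B // j.1 ∉ A} → Fin 2)) where
  toFun x := (fun a => x ⟨a.1, hAB a.2⟩, fun j => x j.1)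
  invFun p := fun j => if h : j.1 ∈ A then p.1 ⟨j.1, h⟩ else p.2 ⟨j, h⟩
  left_inv x := by
    funext j
    dsimp only
    by_cases h : j.1 ∈ A
    · rw [dif_pos h]
    · rw [dif_neg h]
  right_inv p := by
    refine Prod.ext ?_ ?_
    · funext a
      show (if h : a.1 ∈ A then p.1 ⟨a.1, h⟩ else _) = p.1 a
      rw [dif_pos a.2]
    · funext j
      show (if h : (j.1 : Fin n) ∈ A then p.1 ⟨j.1, h⟩ else p.2 ⟨j.1, h⟩) = p.2 j
      rw [dif_neg j.2]

lemma eB_snd_eq_iff {A B : Finset (Fin n)} (hAB : A ⊆ B) (x y : B → Fin 2) :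
    ((eB hAB x).2 = (eB hAB y).2) ↔ ∀ j : B, j.1 ∉ A → x j = y j := by
  constructor
  · intro h j hj
    exact congrFun h ⟨j, hj⟩
  · intro h
    funext j
    exact h j.1 j.2

lemma resx_eq {A B : Finset (Fin n)} (hAB : A ⊆ B) (x : B → Fin 2) :
    resx A B x = (eB hAB x).1 := by
  funext a
  show (if h : a.1 ∈ B then x ⟨a.1, h⟩ else 0) = x ⟨a.1, hAB a.2⟩
  rw [dif_pos (hAB a.2)]

lemma embA_apply' {A B : Finset (Fin n)} (hAB : A ⊆ B)
    (X : Matrix (A → Fin 2) (A → Fin 2) ℂ) (x y : B → Fin 2) :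
    embA A B X x y = if (eB hAB x).2 = (eB hAB y).2 then
      (2:ℂ)⁻¹ ^ (B.card - A.card) * X (eB hAB x).1 (eB hAB y).1 else 0 := by
  rw [embA_apply, resx_eq hAB, resx_eq hAB, if_congr (eB_snd_eq_iff hAB x y).symm rfl rfl]

lemma embA_apply_symm {A B : Finset (Fin n)} (hAB : A ⊆ B)
    (X : Matrix (A → Fin 2) (A → Fin 2) ℂ)
    (p q : (A → Fin 2) × ({j : ↥B // j.1 ∉ A} → Fin 2)) :
    embA A B X ((eB hAB).symm p) ((eB hAB).symm q)
      = if p.2 = q.2 then (2:ℂ)⁻¹ ^ (B.card - A.card) * X p.1 q.1 else 0 := by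
  rw [embA_apply' hAB, Equiv.apply_symm_apply, Equiv.apply_symm_apply]

lemma card_K {A B : Finset (Fin n)} (hAB : A ⊆ B) :
    Fintype.card {j : ↥B // j.1 ∉ A} = B.card - A.card := by
  have e : {j : ↥B // j.1 ∉ A} ≃ ↥(B \ A) :=
    { toFun := fun j => ⟨j.1.1, Finset.mem_sdiff.mpr ⟨j.1.2, j.2⟩⟩
      invFun := fun j => ⟨⟨j.1, (Finset.mem_sdiff.mp j.2).1⟩, (Finset.mem_sdiff.mp j.2).2⟩
      left_inv := fun j => rfl
      right_inv := fun j => rfl }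
  rw [Fintype.card_congr e, Fintype.card_coe, Finset.card_sdiff_of_subset hAB]

lemma card_KFun {A B : Finset (Fin n)} (hAB : A ⊆ B) :
    Fintype.card ({j : ↥B // j.1 ∉ A} → Fin 2) = 2 ^ (B.card - A.card) := by
  rw [Fintype.card_fun, Fintype.card_fin, card_K hAB]

lemma embA_mul {A B : Finset (Fin n)} (hAB : A ⊆ B)
    (Y Z : Matrix (A → Fin 2) (A → Fin 2) ℂ) :
    embA A B Y * embA A B Z = ((2:ℂ)⁻¹ ^ (B.card - A.card)) • embA A B (Y * Z) := by
  set c : ℂ := (2:ℂ)⁻¹ ^ (B.card - A.card) with hc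
  ext x y
  rw [Matrix.mul_apply, Matrix.smul_apply, embA_apply' hAB, smul_eq_mul]
  have hsum : ∑ z : B → Fin 2, embA A B Y x z * embA A B Z z y
      = ∑ p : (A → Fin 2) × ({j : ↥B // j.1 ∉ A} → Fin 2),
          (if (eB hAB x).2 = p.2 then c * Y (eB hAB x).1 p.1 else 0) *
          (if p.2 = (eB hAB y).2 then c * Z p.1 (eB hAB y).1 else 0) := by
    rw [← Equiv.sum_comp (eB hAB) (fun p => _)]
    refine Finset.sum_congr rfl fun z _ => ?_
    rw [embA_apply' hAB, embA_apply' hAB]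
  rw [hsum, Fintype.sum_prod_type]
  have hinner : ∀ a : A → Fin 2,
      (∑ k : {j : ↥B // j.1 ∉ A} → Fin 2,
        (if (eB hAB x).2 = k then c * Y (eB hAB x).1 a else 0) *
        (if k = (eB hAB y).2 then c * Z a (eB hAB y).1 else 0))
      = (c * Y (eB hAB x).1 a) *
          (if (eB hAB x).2 = (eB hAB y).2 then c * Z a (eB hAB y).1 else 0) := by
    intro a
    rw [Finset.sum_congr rfl fun k _ => ite_mul (((eB hAB x).2 = k)) _ _ _]
    simp only [zero_mul]
    rw [Finset.sum_ite_eq Finset.univ ((eB hAB x).2)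
      (fun k => (c * Y (eB hAB x).1 a) * (if k = (eB hAB y).2 then c * Z a (eB hAB y).1 else 0)),
      if_pos (Finset.mem_univ _)]
  rw [Finset.sum_congr rfl fun a _ => hinner a]
  by_cases hxy : (eB hAB x).2 = (eB hAB y).2
  · rw [if_pos hxy]
    rw [Finset.sum_congr rfl fun a _ => by rw [if_pos hxy]]
    rw [Matrix.mul_apply, Finset.mul_sum, Finset.mul_sum]
    refine Finset.sum_congr rfl fun a _ => ?_
    ring
  · rw [if_neg hxy, Finset.sum_congr rfl fun a _ => by rw [if_neg hxy, mul_zero],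
      Finset.sum_const, smul_zero, mul_zero]

lemma embA_conjTranspose (A B : Finset (Fin n)) (X : Matrix (A → Fin 2) (A → Fin 2) ℂ) :
    (embA A B X)ᴴ = embA A B Xᴴ := by
  ext x y
  rw [Matrix.conjTranspose_apply, embA_apply, embA_apply]
  have hiff : (∀ j : B, j.1 ∉ A → y j = x j) ↔ (∀ j : B, j.1 ∉ A → x j = y j) :=
    ⟨fun h j hj => (h j hj).symm, fun h j hj => (h j hj).symm⟩
  by_cases h : ∀ j : B, j.1 ∉ A → x j = y j
  · rw [if_pos (hiff.mpr h), if_pos h, star_mul']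
    rw [show star ((2:ℂ)⁻¹ ^ (B.card - A.card)) = (2:ℂ)⁻¹ ^ (B.card - A.card) by simp]
    rw [Matrix.conjTranspose_apply]
  · rw [if_neg (fun h2 => h (hiff.mp h2)), if_neg h, star_zero]

lemma embA_sub (A B : Finset (Fin n)) (X Y : Matrix (A → Fin 2) (A → Fin 2) ℂ) :
    embA A B (X - Y) = embA A B X - embA A B Y := by
  ext x y
  rw [Matrix.sub_apply, embA_apply, embA_apply, embA_apply]
  split
  · rw [Matrix.sub_apply, mul_sub]
  · rw [sub_zero]

lemma embA_trace {A B : Finset (Fin n)} (hAB : A ⊆ B)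
    (X : Matrix (A → Fin 2) (A → Fin 2) ℂ) :
    (embA A B X).trace = X.trace := by
  have h1 : ∀ x : B → Fin 2, embA A B X x x
      = (2:ℂ)⁻¹ ^ (B.card - A.card) * X (eB hAB x).1 (eB hAB x).1 := by
    intro x
    rw [embA_apply' hAB, if_pos rfl]
  show ∑ x, embA A B X x x = ∑ a, X a a
  rw [Finset.sum_congr rfl fun x _ => h1 x]
  rw [← Equiv.sum_comp (eB hAB).symm
    (fun x => (2:ℂ)⁻¹ ^ (B.card - A.card) * X (eB hAB x).1 (eB hAB x).1)]
  simp only [Equiv.apply_symm_apply]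
  rw [Fintype.sum_prod_type]
  have hk : ∀ a : A → Fin 2, (∑ _k : {j : ↥B // j.1 ∉ A} → Fin 2,
      (2:ℂ)⁻¹ ^ (B.card - A.card) * X a a) = X a a := by
    intro a
    rw [Finset.sum_const, Finset.card_univ, card_KFun hAB, nsmul_eq_mul]
    push_cast
    rw [← mul_assoc, mul_comm ((2:ℂ) ^ (B.card - A.card)) _,
      two_inv_pow_mul_two_pow le_rfl, Nat.sub_self, pow_zero, one_mul]
  exact Finset.sum_congr rfl fun a _ => hk a

lemma embA_posSemidef {A B : Finset (Fin n)} (hAB : A ⊆ B)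
    {X : Matrix (A → Fin 2) (A → Fin 2) ℂ} (hX : X.PosSemidef) :
    (embA A B X).PosSemidef := by
  set W := hX.sqrt with hW
  have hWpsd := hX.posSemidef_sqrt
  have hXemb : embA A B X = (((2 ^ (B.card - A.card) : ℝ)) : ℂ) •
      ((embA A B W)ᴴ * embA A B W) := by
    rw [embA_conjTranspose, hWpsd.1.eq, embA_mul hAB, hX.sqrt_mul_self, smul_smul]
    rw [show (((2 ^ (B.card - A.card) : ℝ)) : ℂ) * (2:ℂ)⁻¹ ^ (B.card - A.card) = 1 by
      push_cast
      rw [mul_comm, two_inv_pow_mul_two_pow le_rfl, Nat.sub_self, pow_zero]]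
    rw [one_smul]
  rw [hXemb]
  exact posSemidef_real_smul (Matrix.posSemidef_conjTranspose_mul_self _) (by positivity)

lemma traceNorm_embA {A B : Finset (Fin n)} (hAB : A ⊆ B)
    (X : Matrix (A → Fin 2) (A → Fin 2) ℂ) :
    traceNorm (embA A B X) = traceNorm X := by
  have hXX := Matrix.posSemidef_conjTranspose_mul_self X
  have hWpsd := hXX.posSemidef_sqrt
  have hWW : hXX.sqrt * hXX.sqrt = Xᴴ * X := hXX.sqrt_mul_self
  have hpsd : (embA A B hXX.sqrt).PosSemidef := embA_posSemidef hAB hWpsd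
  have hsq : (embA A B hXX.sqrt) ^ 2 = (embA A B X)ᴴ * embA A B X := by
    rw [pow_two, embA_mul hAB, embA_conjTranspose, embA_mul hAB, hWW]
  rw [traceNorm_eq_of_sq hpsd hsq, traceNorm_def', ← embA_trace hAB hXX.sqrt]

/-! ### from pinching to embedding -/

def mix (A B : Finset (Fin n)) (b : B → Fin 2) (z : {j : Fin n // j ∉ B} → Fin 2) :
    {j : Fin n // j ∉ A} → Fin 2 :=
  fun j => if h : j.1 ∈ B then b ⟨j.1, h⟩ else z ⟨j.1, h⟩

def psiBA {A B : Finset (Fin n)} (hAB : A ⊆ B) :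
    ((B → Fin 2) × ({j : Fin n // j ∉ B} → Fin 2))
      ≃ ((A → Fin 2) × ({j : Fin n // j ∉ A} → Fin 2)) where
  toFun p := (fun a => p.1 ⟨a.1, hAB a.2⟩, mix A B p.1 p.2)
  invFun q := (fun j => if h : j.1 ∈ A then q.1 ⟨j.1, h⟩ else q.2 ⟨j.1, h⟩,
               fun j => q.2 ⟨j.1, fun hA' => j.2 (hAB hA')⟩)
  left_inv p := by
    refine Prod.ext ?_ ?_
    · funext j
      show (if h : (j.1 : Fin n) ∈ A then p.1 ⟨j.1, hAB h⟩ else mix A B p.1 p.2 ⟨j.1, h⟩)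
          = p.1 j
      by_cases h : j.1 ∈ A
      · rw [dif_pos h]
      · rw [dif_neg h]
        show (if h2 : (j.1 : Fin n) ∈ B then p.1 ⟨j.1, h2⟩ else _) = p.1 j
        rw [dif_pos j.2]
    · funext j
      show mix A B p.1 p.2 ⟨j.1, _⟩ = p.2 j
      show (if h2 : (j.1 : Fin n) ∈ B then p.1 ⟨j.1, h2⟩ else p.2 ⟨j.1, h2⟩) = p.2 j
      rw [dif_neg j.2]
  right_inv q := by
    refine Prod.ext ?_ ?_
    · funext a
      show (if h : (a.1 : Fin n) ∈ A then q.1 ⟨a.1, h⟩ else _) = q.1 a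
      rw [dif_pos a.2]
    · funext j
      show mix A B _ _ j = q.2 j
      by_cases h : j.1 ∈ B
      · show (if h2 : (j.1 : Fin n) ∈ B then
            (if h3 : (j.1 : Fin n) ∈ A then q.1 ⟨j.1, h3⟩ else q.2 ⟨j.1, h3⟩) else _) = q.2 j
        rw [dif_pos h, dif_neg j.2]
      · show (if h2 : (j.1 : Fin n) ∈ B then _ else q.2 ⟨j.1, _⟩) = q.2 j
        rw [dif_neg h]

lemma sum_mix {A B : Finset (Fin n)} (hAB : A ⊆ B)
    (g : ({j : Fin n // j ∉ A} → Fin 2) → ℂ) :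
    (∑ b : B → Fin 2, ∑ z : {j : Fin n // j ∉ B} → Fin 2, g (mix A B b z))
      = 2 ^ A.card * ∑ u : {j : Fin n // j ∉ A} → Fin 2, g u := by
  have h1 : ∑ p : (B → Fin 2) × ({j : Fin n // j ∉ B} → Fin 2), g ((psiBA hAB p).2)
      = ∑ q : (A → Fin 2) × ({j : Fin n // j ∉ A} → Fin 2), g q.2 :=
    Equiv.sum_comp (psiBA hAB) (fun q => g q.2)
  calc ∑ b : B → Fin 2, ∑ z : {j : Fin n // j ∉ B} → Fin 2, g (mix A B b z)
      = ∑ p : (B → Fin 2) × ({j : Fin n // j ∉ B} → Fin 2), g ((psiBA hAB p).2) :=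
        (Fintype.sum_prod_type (f := fun p => g ((psiBA hAB p).2))).symm
    _ = ∑ q : (A → Fin 2) × ({j : Fin n // j ∉ A} → Fin 2), g q.2 := h1
    _ = ∑ _a : A → Fin 2, ∑ u : {j : Fin n // j ∉ A} → Fin 2, g u :=
        Fintype.sum_prod_type (f := fun q => g q.2)
    _ = 2 ^ A.card * ∑ u : {j : Fin n // j ∉ A} → Fin 2, g u := by
        rw [Finset.sum_const, Finset.card_univ, nsmul_eq_mul, Fintype.card_fun,
          Fintype.card_fin, Fintype.card_coe]
        push_cast
        ring

lemma glue_ovr {A B : Finset (Fin n)} (hAB : A ⊆ B) (x : B → Fin 2) (b : B → Fin 2)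
    (z : {j : Fin n // j ∉ B} → Fin 2) :
    glue B (ovr B (B \ A) x b) z = glue A (resx A B x) (mix A B b z) := by
  funext i
  by_cases hiB : i ∈ B
  · rw [glue_mem _ _ hiB]
    by_cases hiA : i ∈ A
    · have h1 : i ∉ B \ A := by simp [hiA]
      rw [glue_mem _ _ hiA]
      show (if (⟨i, hiB⟩ : ↥B).1 ∈ B \ A then b ⟨i, hiB⟩ else x ⟨i, hiB⟩)
          = (if h : i ∈ B then x ⟨i, h⟩ else 0)
      rw [if_neg h1, dif_pos hiB]
    · have h1 : i ∈ B \ A := Finset.mem_sdiff.mpr ⟨hiB, hiA⟩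
      rw [glue_not_mem _ _ hiA]
      show (if (⟨i, hiB⟩ : ↥B).1 ∈ B \ A then b ⟨i, hiB⟩ else x ⟨i, hiB⟩)
          = (if h : i ∈ B then b ⟨i, h⟩ else z ⟨i, h⟩)
      rw [if_pos h1, dif_pos hiB]
  · have hiA : i ∉ A := fun h => hiB (hAB h)
    rw [glue_not_mem _ _ hiB, glue_not_mem _ _ hiA]
    show z ⟨i, hiB⟩ = (if h : i ∈ B then b ⟨i, h⟩ else z ⟨i, h⟩)
    rw [dif_neg hiB]

lemma ΦT_sdiff_eq_embA {A B : Finset (Fin n)} (hAB : A ⊆ B) (ρ : QState n) :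
    ΦT B (B \ A) (ptr B ρ) = embA A B (ptr A ρ) := by
  ext x y
  rw [ΦT_apply, embA_apply]
  have hguard : (∀ j : B, j.1 ∈ B \ A → x j = y j) ↔ (∀ j : B, j.1 ∉ A → x j = y j) := by
    constructor
    · intro h j hj
      exact h j (Finset.mem_sdiff.mpr ⟨j.2, hj⟩)
    · intro h j hj
      exact h j (Finset.mem_sdiff.mp hj).2
  rw [if_congr hguard rfl rfl]
  by_cases hC : ∀ j : B, j.1 ∉ A → x j = y j
  · rw [if_pos hC, if_pos hC]
    have hsum : (∑ b : B → Fin 2, ptr B ρ (ovr B (B \ A) x b) (ovr B (B \ A) y b))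
        = ∑ b : B → Fin 2, ∑ z : {j : Fin n // j ∉ B} → Fin 2,
            ρ (glue A (resx A B x) (mix A B b z)) (glue A (resx A B y) (mix A B b z)) := by
      refine Finset.sum_congr rfl fun b _ => ?_
      show (∑ z : {j : Fin n // j ∉ B} → Fin 2, ρ (glue B (ovr B (B \ A) x b) z)
          (glue B (ovr B (B \ A) y b) z)) = _
      exact Finset.sum_congr rfl fun z _ => by
        rw [glue_ovr hAB x b z, glue_ovr hAB y b z]
    rw [hsum, sum_mix hAB (fun u => ρ (glue A (resx A B x) u) (glue A (resx A B y) u))]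
    rw [← mul_assoc, two_inv_pow_mul_two_pow (Finset.card_le_card hAB)]
    rfl
  · rw [if_neg hC, if_neg hC]

/-! ### hermiticity helpers -/

lemma ptr_isHermitian (A : Finset (Fin n)) {ρ : QState n} (hρ : ρ.IsHermitian) :
    (ptr A ρ).IsHermitian := by
  show (ptr A ρ)ᴴ = ptr A ρ
  ext x y
  rw [Matrix.conjTranspose_apply]
  show star (∑ z : {j : Fin n // j ∉ A} → Fin 2, ρ (glue A y z) (glue A x z))
      = ∑ z : {j : Fin n // j ∉ A} → Fin 2, ρ (glue A x z) (glue A y z)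
  rw [star_sum]
  refine Finset.sum_congr rfl fun z _ => ?_
  rw [← Matrix.conjTranspose_apply, hρ.eq]

end P2
end TDAux
end

/-- After independent depolarization of all `n` qubits, the trace distance of the reduced
states on `B ⊆ [n]` satisfies
`D(E_η^{⊗n}(ρ)|_B, E_η^{⊗n}(σ)|_B) ≤ Σ_{A ⊆ B} η^{|B|-|A|} (1-η)^{|A|} D(ρ|_A, σ|_A)`. -/
theorem traceDist_ptr_depolarizeN_le (η : ℝ) (hη : η ∈ Set.Icc (0 : ℝ) 1) (n : ℕ)
    (ρ σ : QState n) (hρ : IsDensityMatrix ρ) (hσ : IsDensityMatrix σ) (B : Finset (Fin n)) :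
    traceDist (ptr B (depolarizeN η n ρ)) (ptr B (depolarizeN η n σ)) ≤
      ∑ A ∈ B.powerset,
        η ^ (B.card - A.card) * (1 - η) ^ A.card * traceDist (ptr A ρ) (ptr A σ) := by
  obtain ⟨hη0, hη1⟩ := hη
  have hη1' : (0:ℝ) ≤ 1 - η := by linarith
  have hcoef : ∀ A : Finset (Fin n), 0 ≤ η ^ (B.card - A.card) * (1 - η) ^ A.card :=
    fun A => mul_nonneg (pow_nonneg hη0 _) (pow_nonneg hη1' _)
  set f : Finset (Fin n) → Matrix (B → Fin 2) (B → Fin 2) ℂ := fun A =>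
    (((η ^ (B.card - A.card) * (1 - η) ^ A.card : ℝ)) : ℂ) •
      TDAux.embA A B (ptr A ρ - ptr A σ) with hf
  have hdiff : ptr B (depolarizeN η n ρ) - ptr B (depolarizeN η n σ)
      = ∑ A ∈ B.powerset, f A := by
    rw [TDAux.key_decomp η B ρ, TDAux.key_decomp η B σ, ← Finset.sum_sub_distrib]
    refine Finset.sum_congr rfl fun A hA => ?_
    have hAB : A ⊆ B := Finset.mem_powerset.mp hA
    rw [TDAux.ΦT_sdiff_eq_embA hAB ρ, TDAux.ΦT_sdiff_eq_embA hAB σ, ← smul_sub,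
      ← TDAux.embA_sub, hf]
    congr 1
    push_cast
    ring
  have hDherm : ∀ A : Finset (Fin n), (ptr A ρ - ptr A σ).IsHermitian :=
    fun A => (TDAux.ptr_isHermitian A hρ.1.1).sub (TDAux.ptr_isHermitian A hσ.1.1)
  have hterm_herm : ∀ A ∈ B.powerset, (f A).IsHermitian := by
    intro A _
    show Matrix.conjTranspose (f A) = f A
    rw [hf]
    show Matrix.conjTranspose ((((η ^ (B.card - A.card) * (1 - η) ^ A.card : ℝ)) : ℂ) •
      TDAux.embA A B (ptr A ρ - ptr A σ)) = _
    rw [Matrix.conjTranspose_smul, TDAux.embA_conjTranspose, (hDherm A).eq,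
      Complex.star_def, Complex.conj_ofReal]
  have hterm_eq : ∀ A ∈ B.powerset,
      traceNorm (f A)
        = η ^ (B.card - A.card) * (1 - η) ^ A.card * traceNorm (ptr A ρ - ptr A σ) := by
    intro A hA
    rw [hf]
    show traceNorm ((((η ^ (B.card - A.card) * (1 - η) ^ A.card : ℝ)) : ℂ) •
      TDAux.embA A B (ptr A ρ - ptr A σ)) = _
    rw [TDAux.traceNorm_real_smul _ (hcoef A),
      TDAux.traceNorm_embA (Finset.mem_powerset.mp hA)]
  show traceNorm (ptr B (depolarizeN η n ρ) - ptr B (depolarizeN η n σ)) / 2 ≤ _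
  rw [hdiff]
  have hbound := TDAux.traceNorm_sum_le B.powerset f hterm_herm
  have h2 : traceNorm (∑ A ∈ B.powerset, f A) / 2
      ≤ (∑ A ∈ B.powerset, traceNorm (f A)) / 2 := by linarith
  refine h2.trans (le_of_eq ?_)
  rw [Finset.sum_div]
  refine Finset.sum_congr rfl fun A hA => ?_
  rw [hterm_eq A hA, mul_div_assoc]
  rfl
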